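/- For any two bit vectors S, S′ ∈ {−1,1}^m that are adjacent at coordinate i (they agree except at index i), and any x ∈ X^m in the support: | log( dP_{M_DS(S)}(x) / dP_{M_DS(S′)}(x) ) | = ε_DS(x_i), where ε_DS(x) = |log π(x) − log(1 − π(x))| and π is the propensity score induced by the prior that members follow P_1 and non-members follow P_0. -/

import Mathlib

open MeasureTheory

noncomputable section

/-- The density of the distribution-shift mechanism `M_DS(s)` with respect to the product
base measure, when `P1` and `P0` have densities `p1` and `p0`: coordinate `i` contributes
`p1(x_i)` if `s_i = 1` and `p0(x_i)` otherwise. -/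
def MDSdensity {𝒳 : Type*} {m : ℕ} (p1 p0 : 𝒳 → ℝ) (s : Fin m → ℤ) (x : Fin m → 𝒳) : ℝ :=
  ∏ i, (if s i = 1 then p1 (x i) else p0 (x i))

/-- **Proposition (pointwise PLRV of the distribution-shift mechanism).** For any two bit
vectors `S, S' ∈ {−1,1}^m` adjacent at coordinate `i` (they agree except at index `i`)
and any `x` in the support:
`|log(dP_{M_DS(S)}(x)/dP_{M_DS(S')}(x))| = ε_DS(x_i)`, where
`ε_DS(x) = |log π(x) − log(1−π(x))|` and `π = p1/(p1+p0)` is the propensity score induced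
by the prior that members follow `P1` and non-members follow `P0` (each with prior `1/2`),
`p1, p0` being the densities of `P1, P0` with respect to a common base measure `base`. -/
theorem MDS_pointwise_PLRV
    {𝒳 : Type*} [MeasurableSpace 𝒳] (base : Measure 𝒳)
    (P1 P0 : Measure 𝒳) [IsProbabilityMeasure P1] [IsProbabilityMeasure P0]
    (p1 p0 : 𝒳 → ℝ) (hp1meas : Measurable p1) (hp0meas : Measurable p0)
    (hp1nn : ∀ x, 0 ≤ p1 x) (hp0nn : ∀ x, 0 ≤ p0 x)
    (hP1 : P1 = base.withDensity (fun x => ENNReal.ofReal (p1 x)))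
    (hP0 : P0 = base.withDensity (fun x => ENNReal.ofReal (p0 x)))
    -- the propensity score `π(x) = P(S = 1 | X = x) = p1(x)/(p1(x) + p0(x))`
    (pS : 𝒳 → ℝ) (hπ : ∀ x, pS x = p1 x / (p1 x + p0 x))
    (m : ℕ) (s s' : Fin m → ℤ)
    (hs : ∀ j, s j = 1 ∨ s j = -1) (hs' : ∀ j, s' j = 1 ∨ s' j = -1)
    -- `s` and `s'` are adjacent at coordinate `i`: they agree except at index `i`
    (i : Fin m) (hagree : ∀ j, j ≠ i → s j = s' j) (hdiff : s i ≠ s' i)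
    -- `x` is in the support of both `M_DS(s)` and `M_DS(s')`
    (x : Fin m → 𝒳)
    (hsupp : 0 < MDSdensity p1 p0 s x ∧ 0 < MDSdensity p1 p0 s' x) :
    |Real.log (MDSdensity p1 p0 s x / MDSdensity p1 p0 s' x)|
      = |Real.log (pS (x i)) - Real.log (1 - pS (x i))| := by

  classical
  obtain ⟨h1, h2⟩ := hsupp
  set f : Fin m → ℝ := fun j => if s j = 1 then p1 (x j) else p0 (x j) with hf
  set g : Fin m → ℝ := fun j => if s' j = 1 then p1 (x j) else p0 (x j) with hg
  have hfne : ∀ j, f j ≠ 0 := by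
    intro j
    have := Finset.prod_ne_zero_iff.mp (ne_of_gt h1) j (Finset.mem_univ j)
    exact this
  have hgne : ∀ j, g j ≠ 0 := by
    intro j
    exact Finset.prod_ne_zero_iff.mp (ne_of_gt h2) j (Finset.mem_univ j)
  have hfpos : ∀ j, 0 < f j := by
    intro j
    have hnn : 0 ≤ f j := by
      simp only [hf]; split <;> [exact hp1nn _; exact hp0nn _]
    exact lt_of_le_of_ne hnn (Ne.symm (hfne j))
  have hgpos : ∀ j, 0 < g j := by
    intro j
    have hnn : 0 ≤ g j := by
      simp only [hg]; split <;> [exact hp1nn _; exact hp0nn _]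
    exact lt_of_le_of_ne hnn (Ne.symm (hgne j))
  have hCeq : ∏ j ∈ Finset.univ.erase i, f j = ∏ j ∈ Finset.univ.erase i, g j := by
    apply Finset.prod_congr rfl
    intro j hj
    have hji : j ≠ i := (Finset.mem_erase.mp hj).1
    simp only [hf, hg, hagree j hji]
  have hCne : (∏ j ∈ Finset.univ.erase i, f j) ≠ 0 :=
    Finset.prod_ne_zero_iff.mpr fun j _ => hfne j
  have hprodf : MDSdensity p1 p0 s x = f i * ∏ j ∈ Finset.univ.erase i, f j := by
    rw [MDSdensity, Finset.mul_prod_erase _ _ (Finset.mem_univ i)]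
  have hprodg : MDSdensity p1 p0 s' x = g i * ∏ j ∈ Finset.univ.erase i, g j := by
    rw [MDSdensity, Finset.mul_prod_erase _ _ (Finset.mem_univ i)]
  have hratio : MDSdensity p1 p0 s x / MDSdensity p1 p0 s' x = f i / g i := by
    rw [hprodf, hprodg, ← hCeq, mul_div_mul_right _ _ hCne]
  -- identify p1 (x i), p0 (x i) positive
  have hcase : (s i = 1 ∧ s' i = -1) ∨ (s i = -1 ∧ s' i = 1) := by
    rcases hs i with h | h <;> rcases hs' i with h' | h'
    · exact absurd (h.trans h'.symm) hdiff
    · exact Or.inl ⟨h, h'⟩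
    · exact Or.inr ⟨h, h'⟩
    · exact absurd (h.trans h'.symm) hdiff
  have hane : (1 : ℤ) ≠ -1 := by decide
  set a := p1 (x i)
  set b := p0 (x i)
  have hab : (0 < a ∧ 0 < b) := by
    rcases hcase with ⟨h, h'⟩ | ⟨h, h'⟩
    · have hfi := hfpos i; have hgi := hgpos i
      simp only [hf, hg, h, h'] at hfi hgi
      norm_num at hfi hgi
      exact ⟨hfi, hgi⟩
    · have hfi := hfpos i; have hgi := hgpos i
      simp only [hf, hg, h, h'] at hfi hgi
      norm_num at hfi hgi
      exact ⟨hgi, hfi⟩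
  obtain ⟨ha, hb⟩ := hab
  have habpos : 0 < a + b := by linarith
  have h1ps : 1 - pS (x i) = b / (a + b) := by
    rw [hπ]
    field_simp
    change (1 - a / (a + b)) * (a + b) = b
    rw [sub_mul, div_mul_cancel₀ _ (ne_of_gt habpos)]; ring
  have hRHS : |Real.log (pS (x i)) - Real.log (1 - pS (x i))| = |Real.log a - Real.log b| := by
    rw [h1ps, hπ, Real.log_div (ne_of_gt ha) (ne_of_gt habpos),
      Real.log_div (ne_of_gt hb) (ne_of_gt habpos)]
    ring_nf
  rw [hRHS, hratio]
  rcases hcase with ⟨h, h'⟩ | ⟨h, h'⟩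
  · have : f i / g i = a / b := by
      simp [hf, hg, h, h']
      rfl
    rw [this, Real.log_div (ne_of_gt ha) (ne_of_gt hb)]
  · have : f i / g i = b / a := by
      simp [hf, hg, h, h']
      rfl
    rw [this, Real.log_div (ne_of_gt hb) (ne_of_gt ha), abs_sub_comm]
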